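/- arXiv:1703.02560 — 2 statements merged into one kernel-verified Lean document; each statement's English description precedes it below -/
import Mathlib

section
/- In the octonions defined by the Cayley–Dickson construction from the quaternions, every nonzero element x satisfies x · (conj(x)/‖x‖²) = 1 and (conj(x)/‖x‖²) · x = 1; in particular the octonions have no zero divisors. -/
noncomputable section

/-- The octonions, realized as pairs of quaternions via the Cayley–Dickson construction. -/
abbrev Octonion := Quaternion ℝ × Quaternion ℝ

/-- Cayley–Dickson multiplication on `ℍ × ℍ`. -/
def omul (x y : Octonion) : Octonion :=
  (x.1 * y.1 - star y.2 * x.2, y.2 * x.1 + x.2 * star y.1)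

/-- Octonionic conjugation. -/
def oconj (x : Octonion) : Octonion := (star x.1, -x.2)

/-- The Euclidean norm of `ℝ⁸` on the octonions. -/
def onorm (x : Octonion) : ℝ := Real.sqrt (‖x.1‖ ^ 2 + ‖x.2‖ ^ 2)

/-- The Euclidean inner product of `ℝ⁸` on the octonions. -/
def oinner (x y : Octonion) : ℝ := (inner ℝ x.1 y.1 : ℝ) + (inner ℝ x.2 y.2 : ℝ)

/-- The embedding of the complex numbers into the quaternions (span of 1 and i). -/
def cH (a : ℂ) : Quaternion ℝ := ⟨a.re, a.im, 0, 0⟩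

/-- The embedding of the complex numbers into the octonions. -/
def cO (a : ℂ) : Octonion := (cH a, 0)

lemma omul_smul_left (c : ℝ) (x y : Octonion) : omul (c • x) y = c • omul x y := by
  simp [omul, Prod.ext_iff, mul_sub, smul_sub, mul_add, smul_add, mul_smul_comm, smul_mul_assoc]

lemma omul_smul_right (c : ℝ) (x y : Octonion) : omul x (c • y) = c • omul x y := by
  simp [omul, Prod.ext_iff, mul_sub, smul_sub, mul_add, smul_add, mul_smul_comm, smul_mul_assoc]

lemma omul_conj_self (x : Octonion) :
    omul x (oconj x) = (((‖x.1‖ ^ 2 + ‖x.2‖ ^ 2 : ℝ) : Quaternion ℝ), 0) := by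
  obtain ⟨a, b⟩ := x
  simp only [omul, oconj, Prod.ext_iff]
  constructor
  · simp [Quaternion.self_mul_star, Quaternion.star_mul_self, ← Quaternion.normSq_eq_norm_mul_self,
      sq, sub_neg_eq_add]
    try push_cast
    try ring
  · simp [mul_comm]

lemma conj_omul_self (x : Octonion) :
    omul (oconj x) x = (((‖x.1‖ ^ 2 + ‖x.2‖ ^ 2 : ℝ) : Quaternion ℝ), 0) := by
  obtain ⟨a, b⟩ := x
  simp only [omul, oconj, Prod.ext_iff]
  constructor
  · simp [Quaternion.self_mul_star, Quaternion.star_mul_self, ← Quaternion.normSq_eq_norm_mul_self,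
      sq, sub_neg_eq_add]
    try push_cast
    try ring
  · simp

set_option maxHeartbeats 1000000 in
lemma key (x y : Octonion) :
    omul (oconj x) (omul x y) = (‖x.1‖ ^ 2 + ‖x.2‖ ^ 2 : ℝ) • y := by
  obtain ⟨a, b⟩ := x
  obtain ⟨c, d⟩ := y
  simp only [omul, oconj, Prod.ext_iff, Prod.smul_fst, Prod.smul_snd, Prod.fst, Prod.snd]
  rw [show (‖a‖ ^ 2 + ‖b‖ ^ 2 : ℝ) = (Quaternion.normSq a + Quaternion.normSq b : ℝ) from by
    rw [Quaternion.normSq_eq_norm_mul_self, Quaternion.normSq_eq_norm_mul_self]; ring]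
  constructor <;>
  · ext <;>
      simp only [Quaternion.normSq_def', Quaternion.re_mul, Quaternion.imI_mul, Quaternion.imJ_mul,
        Quaternion.imK_mul, Quaternion.re_add, Quaternion.imI_add, Quaternion.imJ_add,
        Quaternion.imK_add, Quaternion.re_sub, Quaternion.imI_sub, Quaternion.imJ_sub,
        Quaternion.imK_sub, Quaternion.re_neg, Quaternion.imI_neg, Quaternion.imJ_neg,
        Quaternion.imK_neg, Quaternion.re_star, Quaternion.imI_star, Quaternion.imJ_star,
        Quaternion.imK_star, Quaternion.re_smul, Quaternion.imI_smul, Quaternion.imJ_smul,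
        Quaternion.imK_smul, smul_eq_mul] <;>
      ring

theorem octonion_inverse_and_no_zero_divisors :
    (∀ x : Octonion, x ≠ 0 →
      omul x ((onorm x ^ 2)⁻¹ • oconj x) = (1, 0) ∧
      omul ((onorm x ^ 2)⁻¹ • oconj x) x = (1, 0)) ∧
    (∀ x y : Octonion, omul x y = 0 → x = 0 ∨ y = 0) := by
  have hn : ∀ x : Octonion, x ≠ 0 → ‖x.1‖ ^ 2 + ‖x.2‖ ^ 2 ≠ 0 := by
    intro x hx h
    apply hx
    have h1 : ‖x.1‖ = 0 ∧ ‖x.2‖ = 0 := by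
      constructor <;> nlinarith [norm_nonneg x.1, norm_nonneg x.2, sq_nonneg ‖x.1‖, sq_nonneg ‖x.2‖]
    ext <;> simp_all
  have honorm : ∀ x : Octonion, onorm x ^ 2 = ‖x.1‖ ^ 2 + ‖x.2‖ ^ 2 := by
    intro x
    rw [onorm, Real.sq_sqrt (by positivity)]
  constructor
  · intro x hx
    have h := hn x hx
    constructor
    · rw [omul_smul_right, omul_conj_self, honorm]
      rw [Prod.smul_mk, smul_zero, ← Quaternion.coe_smul, smul_eq_mul, inv_mul_cancel₀ h,
        Quaternion.coe_one]
    · rw [omul_smul_left, conj_omul_self, honorm]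
      rw [Prod.smul_mk, smul_zero, ← Quaternion.coe_smul, smul_eq_mul, inv_mul_cancel₀ h,
        Quaternion.coe_one]
  · intro x y hxy
    by_cases hx : x = 0
    · exact Or.inl hx
    · right
      have h := key x y
      rw [hxy] at h
      have h0 : omul (oconj x) 0 = 0 := by simp [omul]
      rw [h0] at h
      have := hn x hx
      have := (smul_eq_zero.mp h.symm).resolve_left this
      exact this
end
end

section
/- For every x ∈ 𝕆 and purely imaginary v ∈ 𝕆, the averaged vector field (1/2π)∫₀^{2π} e^{-iθ}·((e^{iθ}·x)·v) dθ equals (x·v - i·((i·x)·v))/2. -/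
noncomputable section

/-- `i = e₁` as an octonion. -/
def oI : Octonion := ((⟨0,1,0,0⟩ : Quaternion ℝ), 0)

def oe : Octonion := ((1 : Quaternion ℝ), 0)

lemma omul_oe_left (z : Octonion) : omul oe z = z := by
  simp [omul, oe]

lemma omul_add_left (a b z : Octonion) : omul (a + b) z = omul a z + omul b z := by
  refine Prod.ext ?_ ?_ <;>
    simp only [omul, Prod.fst_add, Prod.snd_add, add_mul, mul_add, sub_eq_add_neg,
      neg_add] <;> abel

lemma omul_add_right (a b z : Octonion) : omul z (a + b) = omul z a + omul z b := by
  refine Prod.ext ?_ ?_ <;>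
    simp only [omul, Prod.fst_add, Prod.snd_add, star_add, add_mul, mul_add,
      sub_eq_add_neg, neg_add] <;> abel

lemma omul_smul_left_s17 (r : ℝ) (a z : Octonion) : omul (r • a) z = r • omul a z := by
  refine Prod.ext ?_ ?_ <;>
    simp [omul, mul_smul_comm, smul_mul_assoc, smul_sub, smul_add]

lemma omul_smul_right_s17 (r : ℝ) (a z : Octonion) : omul z (r • a) = r • omul z a := by
  refine Prod.ext ?_ ?_ <;>
    simp [omul, mul_smul_comm, smul_mul_assoc, smul_sub, smul_add]

lemma omul_neg_left (a z : Octonion) : omul (-a) z = -omul a z := by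
  refine Prod.ext ?_ ?_ <;>
    simp only [omul, Prod.fst_neg, Prod.snd_neg, mul_neg, neg_mul, Prod.mk.injEq,
      neg_sub, sub_eq_add_neg, neg_add, neg_neg] <;> simp <;> abel

lemma cO_exp (θ : ℝ) :
    cO (Complex.exp (θ * Complex.I)) = Real.cos θ • oe + Real.sin θ • oI := by
  refine Prod.ext ?_ ?_ <;>
  · ext <;> simp [cO, cH, oe, oI, Complex.exp_mul_I, Complex.cos_ofReal_re, Complex.sin_ofReal_re,
    Quaternion.re_one, Quaternion.imI_one, Quaternion.imJ_one, Quaternion.imK_one,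
    Quaternion.re_smul, Quaternion.imI_smul, Quaternion.imJ_smul, Quaternion.imK_smul] <;>
    erw [QuaternionAlgebra.smul_mk] <;> simp

lemma integrand_eq (x v : Octonion) (θ : ℝ) :
    omul (cO (Complex.exp (-θ * Complex.I)))
        (omul (omul (cO (Complex.exp (θ * Complex.I))) x) v) =
      (Real.cos θ ^ 2) • omul x v +
        (Real.sin θ * Real.cos θ) • (omul (omul oI x) v - omul oI (omul x v)) -
        (Real.sin θ ^ 2) • omul oI (omul (omul oI x) v) := by
  have h1 : (-θ : ℂ) * Complex.I = ((-θ : ℝ) : ℂ) * Complex.I := by push_cast; ring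
  rw [h1, cO_exp, cO_exp, Real.cos_neg, Real.sin_neg, neg_smul]
  simp only [omul_add_left, omul_add_right, omul_smul_left_s17, omul_smul_right_s17,
    omul_oe_left, omul_neg_left, sub_eq_add_neg, neg_smul, smul_add, smul_smul, smul_neg]
  module

lemma integral_eq (x v : Octonion) :
    (∫ θ in (0:ℝ)..(2*Real.pi),
        omul (cO (Complex.exp (-θ * Complex.I)))
          (omul (omul (cO (Complex.exp (θ * Complex.I))) x) v)) =
      Real.pi • (omul x v - omul oI (omul (omul oI x) v)) := by
  rw [intervalIntegral.integral_congr (g := fun θ =>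
      (Real.cos θ ^ 2) • omul x v +
        (Real.sin θ * Real.cos θ) • (omul (omul oI x) v - omul oI (omul x v)) -
        (Real.sin θ ^ 2) • omul oI (omul (omul oI x) v))
      (fun θ _ => integrand_eq x v θ)]
  have h1 : Continuous fun θ : ℝ => (Real.cos θ ^ 2) • omul x v :=
    (Real.continuous_cos.pow 2).smul continuous_const
  have h2 : Continuous fun θ : ℝ =>
      (Real.sin θ * Real.cos θ) • (omul (omul oI x) v - omul oI (omul x v)) :=
    (Real.continuous_sin.mul Real.continuous_cos).smul continuous_const
  have h3 : Continuous fun θ : ℝ => (Real.sin θ ^ 2) • omul oI (omul (omul oI x) v) :=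
    (Real.continuous_sin.pow 2).smul continuous_const
  rw [intervalIntegral.integral_sub (f := fun θ : ℝ =>
        (Real.cos θ ^ 2) • omul x v +
          (Real.sin θ * Real.cos θ) • (omul (omul oI x) v - omul oI (omul x v)))
      ((h1.add h2).intervalIntegrable _ _)
      (h3.intervalIntegrable _ _),
    intervalIntegral.integral_add (h1.intervalIntegrable _ _) (h2.intervalIntegrable _ _),
    intervalIntegral.integral_smul_const, intervalIntegral.integral_smul_const,
    intervalIntegral.integral_smul_const, integral_cos_sq, integral_sin_mul_cos₁,
    integral_sin_sq]
  simp [Real.sin_two_pi, Real.cos_two_pi, smul_sub]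


theorem octonion_average_equals_Wfield (x v : Octonion) (hv : v.1.re = 0) :
    (1 / (2 * Real.pi)) •
        (∫ θ in (0 : ℝ)..(2 * Real.pi),
          omul (cO (Complex.exp (-θ * Complex.I)))
            (omul (omul (cO (Complex.exp (θ * Complex.I))) x) v)) =
      (1 / 2 : ℝ) • (omul x v - omul oI (omul (omul oI x) v)) := by
  rw [integral_eq, smul_smul]
  congr 1
  field_simp
end
end
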